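/- arXiv:2303.09511 — 4 statements merged into one kernel-verified Lean document; each statement's English description precedes it below -/
import Mathlib

section
/- The DRS splitting of a vector is weight-preserving and sum-preserving: for any positive integer threshold w and any vector v ∈ 𝔽₂^{2ⁿ}, the DRS algorithm applied to (w, v) terminates, every output vector has Hamming weight at most w (and at least 1), and the outputs sum to v over 𝔽₂ (indeed their supports partition the support of v). -/
def wtH (l : List (ZMod 2)) : ℕ := l.countP (fun a => a ≠ 0)

def drs (w : ℕ) : ℕ → List (ZMod 2) → List (List (ZMod 2))
  | 0, x => if wtH x = 0 then [] else [x]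
  | n + 1, x =>
      if wtH x = 0 then []
      else if wtH x ≤ w then [x]
      else ((drs w n (x.take (2 ^ n))).map (fun y => y ++ List.replicate (2 ^ n) 0)) ++
           ((drs w n (x.drop (2 ^ n))).map (fun y => List.replicate (2 ^ n) (0 : ZMod 2) ++ y))

lemma wtH_append (a b : List (ZMod 2)) : wtH (a ++ b) = wtH a + wtH b :=
  List.countP_append

lemma wtH_replicate (k : ℕ) : wtH (List.replicate k (0:ZMod 2)) = 0 := by
  simp [wtH]

lemma wtH_eq_zero {v : List (ZMod 2)} (h : wtH v = 0) : v = List.replicate v.length 0 := by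
  rw [List.eq_replicate_iff]
  refine ⟨rfl, fun b hb => ?_⟩
  by_contra hb0
  have := List.countP_eq_zero.mp h b hb
  simp [hb0] at this

lemma getD_replicate_zero (k i : ℕ) : (List.replicate k (0:ZMod 2)).getD i 0 = 0 := by
  simp [List.getD]

lemma zip_self_zero (v : List (ZMod 2)) :
    List.zipWith (·+·) v (List.replicate v.length 0) = v := by
  induction v with
  | nil => simp
  | cons a l ih => simp [List.replicate_succ, ih]

lemma zip_zero_left (t : List (ZMod 2)) :
    List.zipWith (·+·) (List.replicate t.length 0) t = t := by
  induction t with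
  | nil => simp
  | cons a l ih => simp [List.replicate_succ, ih]

lemma take_len {n : ℕ} {v : List (ZMod 2)} (hv : v.length = 2^(n+1)) :
    (v.take (2^n)).length = 2^n := by
  rw [List.length_take, hv, pow_succ, Nat.mul_two]
  exact min_eq_left (Nat.le_add_right _ _)

lemma drop_len {n : ℕ} {v : List (ZMod 2)} (hv : v.length = 2^(n+1)) :
    (v.drop (2^n)).length = 2^n := by
  rw [List.length_drop, hv, pow_succ, Nat.mul_two, Nat.add_sub_cancel]

lemma drs_length (w : ℕ) : ∀ n (v : List (ZMod 2)), v.length = 2^n →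
    ∀ y ∈ drs w n v, y.length = 2^n := by
  intro n
  induction n with
  | zero =>
    intro v hv y hy
    simp only [drs] at hy
    split at hy
    · simp at hy
    · simp at hy; simpa [hy]
  | succ n ih =>
    intro v hv y hy
    simp only [drs] at hy
    split at hy
    · simp at hy
    · split at hy
      · simp at hy; subst hy; exact hv
      · simp only [List.mem_append, List.mem_map] at hy
        rcases hy with ⟨z, hz, rfl⟩ | ⟨z, hz, rfl⟩
        · have := ih _ (take_len hv) z hz
          rw [List.length_append, this, List.length_replicate, pow_succ, Nat.mul_two]
        · have := ih _ (drop_len hv) z hz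
          rw [List.length_append, this, List.length_replicate, pow_succ, Nat.mul_two]

lemma foldr_zip_length (m : ℕ) (L : List (List (ZMod 2))) (hL : ∀ y ∈ L, y.length = m)
    (s : List (ZMod 2)) (hs : s.length = m) :
    (L.foldr (fun y acc => List.zipWith (·+·) y acc) s).length = m := by
  induction L with
  | nil => simpa
  | cons a l ih =>
    simp only [List.foldr_cons, List.length_zipWith]
    rw [ih (fun y hy => hL y (List.mem_cons_of_mem _ hy)), hL a (List.mem_cons_self)]
    simp

lemma foldr_pad_right (m k : ℕ) (L : List (List (ZMod 2))) (hL : ∀ y ∈ L, y.length = m)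
    (s t : List (ZMod 2)) (hs : s.length = m) (ht : t.length = k) :
    (L.map (fun y => y ++ List.replicate k (0:ZMod 2))).foldr
      (fun y acc => List.zipWith (·+·) y acc) (s ++ t)
    = (L.foldr (fun y acc => List.zipWith (·+·) y acc) s) ++ t := by
  induction L with
  | nil => simp
  | cons a l ih =>
    have h1 := hL a (List.mem_cons_self)
    have h2 : ∀ y ∈ l, y.length = m := fun y hy => hL y (List.mem_cons_of_mem _ hy)
    simp only [List.map_cons, List.foldr_cons, ih h2]
    rw [List.zipWith_append (by rw [h1, foldr_zip_length m l h2 s hs])]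
    congr 1
    rw [← ht]; exact zip_zero_left t

lemma foldr_pad_left (m k : ℕ) (L : List (List (ZMod 2))) (hL : ∀ y ∈ L, y.length = m)
    (s t : List (ZMod 2)) (hs : s.length = k) (ht : t.length = m) :
    (L.map (fun y => List.replicate k (0:ZMod 2) ++ y)).foldr
      (fun y acc => List.zipWith (·+·) y acc) (s ++ t)
    = s ++ (L.foldr (fun y acc => List.zipWith (·+·) y acc) t) := by
  induction L with
  | nil => simp
  | cons a l ih =>
    have h2 : ∀ y ∈ l, y.length = m := fun y hy => hL y (List.mem_cons_of_mem _ hy)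
    simp only [List.map_cons, List.foldr_cons, ih h2]
    rw [List.zipWith_append (by simp [hs])]
    congr 1
    rw [← hs]; exact zip_zero_left s

/-- The DRS splitting is weight- and sum-preserving: for threshold `w ≥ 1` and a
vector `v` of length `2^n`, every output vector has Hamming weight between `1` and
`w`, the outputs sum to `v` over `𝔽₂`, and the supports of the outputs are pairwise
disjoint (so they partition the support of `v`). -/
theorem drs_weight_and_sum (w n : ℕ) (hw : 1 ≤ w) (v : List (ZMod 2))
    (hv : v.length = 2 ^ n) :
    (∀ y ∈ drs w n v, 1 ≤ wtH y ∧ wtH y ≤ w) ∧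
    (drs w n v).foldr (fun y acc => List.zipWith (· + ·) y acc)
        (List.replicate (2 ^ n) (0 : ZMod 2)) = v ∧
    (drs w n v).Pairwise (fun y z => ∀ i : ℕ, y.getD i 0 = 0 ∨ z.getD i 0 = 0) := by
  induction n generalizing v with
  | zero =>
    by_cases h0 : wtH v = 0
    · refine ⟨?_, ?_, ?_⟩ <;> simp only [drs, h0, if_pos rfl, if_true]
      · simp
      · rw [← hv]; exact (wtH_eq_zero h0).symm
      · simp
    · have hd : drs w 0 v = [v] := by simp [drs, h0]
      refine ⟨?_, ?_, ?_⟩ <;> rw [hd]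
      · intro y hy
        simp at hy; subst hy
        simp only [pow_zero] at hv
        have h1 : wtH y ≤ y.length := List.countP_le_length
        refine ⟨by omega, by omega⟩
      · simp only [List.foldr_cons, List.foldr_nil]
        rw [← hv]; exact zip_self_zero v
      · simp
  | succ n ih =>
    by_cases h0 : wtH v = 0
    · refine ⟨?_, ?_, ?_⟩ <;> simp only [drs, h0, if_pos rfl, if_true]
      · simp
      · rw [← hv]; exact (wtH_eq_zero h0).symm
      · simp
    · by_cases hle : wtH v ≤ w
      · have hd : drs w (n+1) v = [v] := by simp [drs, h0, hle]
        refine ⟨?_, ?_, ?_⟩ <;> rw [hd]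
        · intro y hy; simp at hy; subst hy; exact ⟨by omega, hle⟩
        · simp only [List.foldr_cons, List.foldr_nil]
          rw [← hv]; exact zip_self_zero v
        · simp
      · have hd : drs w (n+1) v =
            ((drs w n (v.take (2 ^ n))).map (fun y => y ++ List.replicate (2 ^ n) 0)) ++
            ((drs w n (v.drop (2 ^ n))).map (fun y => List.replicate (2 ^ n) (0 : ZMod 2) ++ y)) := by
          simp [drs, h0, hle]
        have htl := take_len hv
        have hdl := drop_len hv
        obtain ⟨ih1, ih2, ih3⟩ := ih _ htl
        obtain ⟨ih1', ih2', ih3'⟩ := ih _ hdl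
        have hlen1 := drs_length w n _ htl
        have hlen2 := drs_length w n _ hdl
        refine ⟨?_, ?_, ?_⟩ <;> rw [hd]
        · intro y hy
          simp only [List.mem_append, List.mem_map] at hy
          rcases hy with ⟨z, hz, rfl⟩ | ⟨z, hz, rfl⟩
          · simpa [wtH_append, wtH_replicate] using ih1 z hz
          · simpa [wtH_append, wtH_replicate] using ih1' z hz
        · rw [List.foldr_append]
          have hpow : (2:ℕ)^(n+1) = 2^n + 2^n := by rw [pow_succ, Nat.mul_two]
          rw [hpow, List.replicate_add,
            foldr_pad_left (2^n) (2^n) _ hlen2 _ _ (by simp) (by simp), ih2',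
            foldr_pad_right (2^n) (2^n) _ hlen1 _ _ (by simp) hdl, ih2]
          exact List.take_append_drop _ v
        · rw [List.pairwise_append]
          refine ⟨?_, ?_, ?_⟩
          · rw [List.pairwise_map]
            refine ih3.imp ?_
            intro y z hyz i
            rcases lt_or_ge i ((y : List (ZMod 2)).length) with h | h
            · rw [List.getD_append _ _ _ _ h]
              rcases lt_or_ge i z.length with h' | h'
              · rw [List.getD_append _ _ _ _ h']; exact hyz i
              · right; rw [List.getD_append_right _ _ _ _ h', getD_replicate_zero]
            · left; rw [List.getD_append_right _ _ _ _ h, getD_replicate_zero]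
          · rw [List.pairwise_map]
            refine ih3'.imp ?_
            intro y z hyz i
            rcases lt_or_ge i (2^n) with h | h
            · left; rw [List.getD_append _ _ _ _ (by simpa using h), getD_replicate_zero]
            · rw [List.getD_append_right _ _ _ _ (by simpa using h),
                List.getD_append_right _ _ _ _ (by simpa using h)]
              simp only [List.length_replicate]
              exact hyz (i - 2^n)
          · intro a ha b hb
            simp only [List.mem_map] at ha hb
            obtain ⟨y, hy, rfl⟩ := ha
            obtain ⟨z, hz, rfl⟩ := hb
            intro i
            rcases lt_or_ge i (2^n) with h | h
            · right; rw [List.getD_append _ _ _ _ (by simpa using h), getD_replicate_zero]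
            · left
              rw [List.getD_append_right _ _ _ _ (by rw [hlen1 y hy]; exact h),
                getD_replicate_zero]
end

section
/- Let w = 2^{n_lub} with 0 ≤ n_lub ≤ n, and let u_i = 1^{(s₁,…,sₙ)} where s₁ = ⋯ = sᵢ = − and s_{i+1} = ⋯ = sₙ = + (the canonical column of G₂^{⊗n} with i minus signs). Then n_DRS(u_i) = 1 if i ≤ n_lub, and n_DRS(u_i) = 2^{i − n_lub} if i > n_lub; in the latter case every output vector has Hamming weight exactly 2^{n_lub}. -/
/-- One Kronecker-product step: `true` (minus sign) is `v ⊗ [1,1]ᵀ`, `false` (plus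
sign) is `v ⊗ [0,1]ᵀ`. -/
def kronStep (b : Bool) (v : List (ZMod 2)) : List (ZMod 2) :=
  if b then v ++ v else List.replicate v.length 0 ++ v

/-- The canonical column `u_i` of `G₂^{⊗n}` with `i` minus signs first: obtained from
`[1]` by `i` Kronecker products with `[1,1]ᵀ` followed by `n−i` with `[0,1]ᵀ`. -/
def uCol (n i : ℕ) : List (ZMod 2) :=
  (List.replicate i true ++ List.replicate (n - i) false).foldl
    (fun acc b => kronStep b acc) [1]

/-- Explicit form of `uCol`. -/
def vni (n i : ℕ) : List (ZMod 2) :=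
  List.replicate (2 ^ n - 2 ^ i) 0 ++ List.replicate (2 ^ i) 1

lemma wtH_replicate_zero (k : ℕ) : wtH (List.replicate k (0 : ZMod 2)) = 0 := by
  induction k with
  | zero => rfl
  | succ k ih =>
    simp only [wtH, List.replicate_succ, List.countP_cons] at *
    simp [ih]

lemma wtH_replicate_one (k : ℕ) : wtH (List.replicate k (1 : ZMod 2)) = k := by
  induction k with
  | zero => rfl
  | succ k ih =>
    rw [List.replicate_succ, wtH, List.countP_cons, ← wtH, ih]
    norm_num

lemma vni_length {n i : ℕ} (h : i ≤ n) : (vni n i).length = 2 ^ n := by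
  have : 2 ^ i ≤ 2 ^ n := Nat.pow_le_pow_right (by norm_num) h
  simp [vni]; omega

lemma wtH_vni {n i : ℕ} (h : i ≤ n) : wtH (vni n i) = 2 ^ i := by
  simp [vni, wtH_append, wtH_replicate_zero, wtH_replicate_one]

lemma vni_succ {n i : ℕ} (h : i ≤ n) :
    vni (n + 1) i = List.replicate (2 ^ n) 0 ++ vni n i := by
  have h1 : 2 ^ i ≤ 2 ^ n := Nat.pow_le_pow_right (by norm_num) h
  have h2 : 2 ^ (n + 1) - 2 ^ i = 2 ^ n + (2 ^ n - 2 ^ i) := by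
    rw [pow_succ]; omega
  rw [vni, vni, h2, List.replicate_add, List.append_assoc]

lemma vni_self (n : ℕ) : vni (n + 1) (n + 1) = vni n n ++ vni n n := by
  simp [vni, ← List.replicate_add, pow_succ]
  ring_nf

lemma uCol_eq : ∀ n i, i ≤ n → uCol n i = vni n i := by
  intro n
  induction n with
  | zero =>
    intro i hi
    interval_cases i
    simp [uCol, vni]
  | succ n ih =>
    intro i hi
    rcases Nat.lt_or_ge i (n + 1) with h | h
    · have hin : i ≤ n := Nat.lt_succ_iff.mp h
      have hrep : List.replicate (n + 1 - i) false
          = List.replicate (n - i) false ++ [false] := by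
        have : n + 1 - i = (n - i) + 1 := by omega
        rw [this, List.replicate_succ']
      have : uCol (n + 1) i = kronStep false (uCol n i) := by
        unfold uCol
        rw [hrep, ← List.append_assoc, List.foldl_append]
        rfl
      rw [this, ih i hin, vni_succ hin]
      simp [kronStep, vni_length hin]
    · have hi' : i = n + 1 := le_antisymm hi h
      subst hi'
      have : uCol (n + 1) (n + 1) = kronStep true (uCol n n) := by
        unfold uCol
        simp [List.replicate_succ', List.foldl_append]
      rw [this, ih n le_rfl, vni_self]
      simp [kronStep]

lemma drs_zero {w n : ℕ} {x : List (ZMod 2)} (h : wtH x = 0) : drs w n x = [] := by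
  cases n <;> simp [drs, h]

lemma drs_vni (nlub : ℕ) : ∀ n i, nlub ≤ i → i ≤ n →
    (drs (2 ^ nlub) n (vni n i)).length = 2 ^ (i - nlub) ∧
    ∀ y ∈ drs (2 ^ nlub) n (vni n i), wtH y = 2 ^ nlub := by
  intro n
  induction n with
  | zero =>
    intro i h1 h2
    have hi : i = 0 := Nat.le_zero.mp h2
    have hn : nlub = 0 := by omega
    subst hi; subst hn
    have hw : wtH (vni 0 0) = 1 := wtH_vni le_rfl
    simp [drs, hw]
  | succ n ih =>
    intro i h1 h2
    have hw : wtH (vni (n + 1) i) = 2 ^ i := wtH_vni h2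
    have hne : wtH (vni (n + 1) i) ≠ 0 := by rw [hw]; positivity
    rcases eq_or_lt_of_le h1 with heq | hlt
    · -- i = nlub : single output
      have hle : wtH (vni (n + 1) i) ≤ 2 ^ nlub := by rw [hw, ← heq]
      simp only [drs, if_neg hne, if_pos hle]
      refine ⟨by simp [← heq], ?_⟩
      intro y hy
      simp at hy
      rw [hy, hw, heq]
    · -- nlub < i
      have hnle : ¬ wtH (vni (n + 1) i) ≤ 2 ^ nlub := by
        rw [hw]
        exact not_le.mpr (Nat.pow_lt_pow_right (by norm_num) hlt)
      simp only [drs, if_neg hne, if_neg hnle]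
      rcases Nat.lt_or_ge i (n + 1) with h | h
      · -- i ≤ n : left half is zero
        have hin : i ≤ n := Nat.lt_succ_iff.mp h
        have hv := vni_succ hin
        have hlen : (List.replicate (2 ^ n) (0 : ZMod 2)).length = 2 ^ n := by simp
        have htake : (vni (n + 1) i).take (2 ^ n) = List.replicate (2 ^ n) 0 := by
          rw [hv, List.take_left' hlen]
        have hdrop : (vni (n + 1) i).drop (2 ^ n) = vni n i := by
          rw [hv, List.drop_left' hlen]
        rw [htake, hdrop, drs_zero (wtH_replicate_zero _)]
        obtain ⟨ihl, ihm⟩ := ih i h1 hin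
        constructor
        · simp [ihl]
        · intro y hy
          simp at hy
          obtain ⟨z, hz, rfl⟩ := hy
          rw [wtH_append, wtH_replicate_zero, ihm z hz]
          omega
      · -- i = n + 1 : both halves
        have hi' : i = n + 1 := le_antisymm h2 h
        subst hi'
        have hv := vni_self n
        have hlen : (vni n n).length = 2 ^ n := vni_length le_rfl
        have htake : (vni (n + 1) (n + 1)).take (2 ^ n) = vni n n := by
          rw [hv, List.take_left' hlen]
        have hdrop : (vni (n + 1) (n + 1)).drop (2 ^ n) = vni n n := by
          rw [hv, List.drop_left' hlen]
        rw [htake, hdrop]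
        have hn1 : nlub ≤ n := by omega
        obtain ⟨ihl, ihm⟩ := ih n hn1 le_rfl
        constructor
        · have : n + 1 - nlub = (n - nlub) + 1 := by omega
          simp [ihl, this, pow_succ]
          ring
        · intro y hy
          simp at hy
          rcases hy with ⟨z, hz, rfl⟩ | ⟨z, hz, rfl⟩
          · rw [wtH_append, wtH_replicate_zero, ihm z hz]; omega
          · rw [wtH_append, wtH_replicate_zero, ihm z hz]; omega


/-- With threshold `w = 2^{n_lub}`, `n_DRS(u_i) = 1` for `i ≤ n_lub` and
`n_DRS(u_i) = 2^{i−n_lub}` for `i > n_lub`, and in the latter case every output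
vector has Hamming weight exactly `2^{n_lub}`. -/
theorem drs_count_uCol (n nlub i : ℕ) (hnl : nlub ≤ n) (hi : i ≤ n) :
    (i ≤ nlub → (drs (2 ^ nlub) n (uCol n i)).length = 1) ∧
    (nlub < i →
      (drs (2 ^ nlub) n (uCol n i)).length = 2 ^ (i - nlub) ∧
      ∀ y ∈ drs (2 ^ nlub) n (uCol n i), wtH y = 2 ^ nlub) := by
  rw [uCol_eq n i hi]
  constructor
  · intro hle
    have hw : wtH (vni n i) = 2 ^ i := wtH_vni hi
    have hne : wtH (vni n i) ≠ 0 := by rw [hw]; positivity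
    have hle' : wtH (vni n i) ≤ 2 ^ nlub := by
      rw [hw]; exact Nat.pow_le_pow_right (by norm_num) hle
    cases n with
    | zero => simp [drs, hne]
    | succ m => simp [drs, hne, hle']
  · intro hlt
    exact drs_vni nlub n i (le_of_lt hlt) hi
end

section
/- Let λ > λ* := h_b(2/3) − 1/3, where h_b is the binary entropy function. With threshold w = 2^{⌈nλ⌉}, the quantity γₙ := (1/2ⁿ) Σ_{i=0}^{n} C(n,i)·n_DRS(u_i) − 1 = (1/2ⁿ) Σ_{i>⌈nλ⌉} C(n,i)·(2^{i−⌈nλ⌉} − 1) tends to 0 as n → ∞, and in fact decays exponentially in n. -/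
open Filter Finset

/-- The binary entropy function. -/
noncomputable def hb (p : ℝ) : ℝ := -p * Real.logb 2 p - (1 - p) * Real.logb 2 (1 - p)

/-- The multiplicative rate loss `γₙ` of the DRS algorithm with threshold
`w = 2^{⌈nλ⌉}` applied to `G₂^{⊗n}`:
`γₙ = (1/2ⁿ) Σ_{i=0}^{n} C(n,i)·n_DRS(u_i) − 1`, where `n_DRS(u_i) = 1` for
`i ≤ ⌈nλ⌉` and `2^{i−⌈nλ⌉}` otherwise. -/
noncomputable def gammaDRS (lam : ℝ) (n : ℕ) : ℝ :=
  (1 / 2 ^ n) * ∑ i ∈ Finset.range (n + 1),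
    (n.choose i : ℝ) *
      (if i ≤ ⌈(n : ℝ) * lam⌉₊ then 1 else 2 ^ (i - ⌈(n : ℝ) * lam⌉₊)) - 1

lemma hb_two_thirds : hb (2 / 3) - 1 / 3 = Real.logb 2 3 - 1 := by
  unfold hb
  have h23 : Real.logb 2 (2 / 3) = 1 - Real.logb 2 3 := by
    rw [Real.logb_div (by norm_num) (by norm_num),
      Real.logb_self_eq_one (by norm_num)]
  have h13 : Real.logb 2 (1 - 2 / 3) = - Real.logb 2 3 := by
    norm_num
    rw [Real.logb_div (by norm_num) (by norm_num), Real.logb_one]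
    ring
  rw [h23, h13]; ring

/-- The exact formula for γₙ. -/
lemma gammaDRS_eq (lam : ℝ) (n : ℕ) :
    gammaDRS lam n =
      (1 / 2 ^ n) * ∑ i ∈ (Finset.range (n + 1)).filter (fun i => ⌈(n : ℝ) * lam⌉₊ < i),
        (n.choose i : ℝ) * (2 ^ (i - ⌈(n : ℝ) * lam⌉₊) - 1) := by
  unfold gammaDRS
  set m := ⌈(n : ℝ) * lam⌉₊ with hm
  have key : ∀ i ∈ Finset.range (n + 1),
      (n.choose i : ℝ) * (if i ≤ m then 1 else 2 ^ (i - m))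
        = (n.choose i : ℝ) + (if m < i then (n.choose i : ℝ) * ((2:ℝ) ^ (i - m) - 1) else 0) := by
    intro i _
    by_cases h : i ≤ m
    · simp [h, Nat.not_lt.2 h]
    · push_neg at h
      rw [if_neg (Nat.not_le.2 h), if_pos h]
      ring
  rw [Finset.sum_congr rfl key, Finset.sum_add_distrib, ← Finset.sum_filter]
  have hch : ∑ i ∈ Finset.range (n + 1), (n.choose i : ℝ) = 2 ^ n := by
    exact_mod_cast Nat.sum_range_choose n
  rw [hch]
  have h2n : (2 : ℝ) ^ n ≠ 0 := by positivity
  field_simp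
  ring

lemma gammaDRS_nonneg (lam : ℝ) (n : ℕ) : 0 ≤ gammaDRS lam n := by
  rw [gammaDRS_eq]
  apply mul_nonneg (by positivity)
  apply Finset.sum_nonneg
  intro i _
  apply mul_nonneg (by positivity)
  have : (1:ℝ) ≤ 2 ^ (i - ⌈(n : ℝ) * lam⌉₊) := one_le_pow₀ (by norm_num)
  linarith

lemma gammaDRS_le (lam : ℝ) (n : ℕ) :
    gammaDRS lam n ≤ (3:ℝ) ^ n / (2 ^ ⌈(n : ℝ) * lam⌉₊ * 2 ^ n) := by
  rw [gammaDRS_eq]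
  set m := ⌈(n : ℝ) * lam⌉₊ with hm
  have hstep : ∑ i ∈ (Finset.range (n + 1)).filter (fun i => m < i),
      (n.choose i : ℝ) * ((2:ℝ) ^ (i - m) - 1)
      ≤ (∑ i ∈ Finset.range (n + 1), (n.choose i : ℝ) * 2 ^ i) / 2 ^ m := by
    rw [Finset.sum_div]
    calc ∑ i ∈ (Finset.range (n + 1)).filter (fun i => m < i),
          (n.choose i : ℝ) * ((2:ℝ) ^ (i - m) - 1)
        ≤ ∑ i ∈ (Finset.range (n + 1)).filter (fun i => m < i),
          (n.choose i : ℝ) * 2 ^ i / 2 ^ m := by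
          apply Finset.sum_le_sum
          intro i hi
          rw [Finset.mem_filter] at hi
          have hmi : m ≤ i := le_of_lt hi.2
          have hpow : (2:ℝ) ^ (i - m) = 2 ^ i / 2 ^ m := by
            rw [eq_div_iff (by positivity), ← pow_add, Nat.sub_add_cancel hmi]
          rw [hpow, mul_div_assoc]
          have : (0:ℝ) ≤ (n.choose i : ℝ) := by positivity
          nlinarith [pow_pos (by norm_num : (0:ℝ) < 2) i, pow_pos (by norm_num : (0:ℝ) < 2) m]
      _ ≤ ∑ i ∈ Finset.range (n + 1), (n.choose i : ℝ) * 2 ^ i / 2 ^ m := by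
          apply Finset.sum_le_sum_of_subset_of_nonneg (Finset.filter_subset _ _)
          intro i _ _
          positivity
  have hbin : ∑ i ∈ Finset.range (n + 1), (n.choose i : ℝ) * 2 ^ i = 3 ^ n := by
    have := add_pow (2:ℝ) 1 n
    norm_num at this
    rw [this]
    exact Finset.sum_congr rfl fun i _ => by ring
  rw [hbin] at hstep
  calc (1 / 2 ^ n) * ∑ i ∈ (Finset.range (n + 1)).filter (fun i => m < i),
        (n.choose i : ℝ) * ((2:ℝ) ^ (i - m) - 1)
      ≤ (1 / 2 ^ n) * ((3:ℝ) ^ n / 2 ^ m) := by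
        apply mul_le_mul_of_nonneg_left hstep (by positivity)
    _ = (3:ℝ) ^ n / (2 ^ m * 2 ^ n) := by ring

lemma gammaDRS_le_rpow (lam : ℝ) (hlam : hb (2 / 3) - 1 / 3 < lam) (n : ℕ) :
    gammaDRS lam n ≤ (2 : ℝ) ^ (-((lam - (Real.logb 2 3 - 1)) * n)) := by
  set L := Real.logb 2 3 with hL
  set m := ⌈(n : ℝ) * lam⌉₊ with hm
  have h3 : (3:ℝ) ^ n = (2:ℝ) ^ (L * n) := by
    have h32 : (3:ℝ) = (2:ℝ) ^ (L:ℝ) :=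
      (Real.rpow_logb (by norm_num) (by norm_num) (by norm_num)).symm
    rw [Real.rpow_mul (by norm_num), ← h32, Real.rpow_natCast]
  have hden : (2:ℝ) ^ m * 2 ^ n = (2:ℝ) ^ (((m:ℝ) + n)) := by
    rw [Real.rpow_add (by norm_num), Real.rpow_natCast, Real.rpow_natCast]
  calc gammaDRS lam n ≤ (3:ℝ) ^ n / (2 ^ m * 2 ^ n) := gammaDRS_le lam n
    _ = (2:ℝ) ^ (L * n - ((m:ℝ) + n)) := by
        rw [h3, hden, Real.rpow_sub (by norm_num)]
    _ ≤ (2:ℝ) ^ (-((lam - (L - 1)) * n)) := by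
        apply Real.rpow_le_rpow_of_exponent_le (by norm_num)
        have hceil : (n:ℝ) * lam ≤ (m:ℝ) := Nat.le_ceil _
        nlinarith
lemma rpow_tendsto (c : ℝ) (hc : 0 < c) :
    Tendsto (fun n : ℕ => (2:ℝ) ^ (-(c * n))) atTop (nhds 0) := by
  have h1 : (2:ℝ) ^ (-c) < 1 :=
    Real.rpow_lt_one_of_one_lt_of_neg (by norm_num) (by linarith)
  have h0 : 0 ≤ (2:ℝ) ^ (-c) := Real.rpow_nonneg (by norm_num) _
  have := tendsto_pow_atTop_nhds_zero_of_lt_one h0 h1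
  apply this.congr
  intro n
  rw [← Real.rpow_natCast ((2:ℝ) ^ (-c)) n, ← Real.rpow_mul (by norm_num)]
  ring_nf

/-- For `λ > λ* = h_b(2/3) − 1/3`, the rate loss `γₙ` equals
`(1/2ⁿ) Σ_{i>⌈nλ⌉} C(n,i)(2^{i−⌈nλ⌉} − 1)`, tends to `0`, and decays
exponentially in `n`. -/
theorem gammaDRS_tendsto_zero (lam : ℝ) (hlam : hb (2 / 3) - 1 / 3 < lam) :
    (∀ n : ℕ, gammaDRS lam n =
      (1 / 2 ^ n) * ∑ i ∈ (Finset.range (n + 1)).filter (fun i => ⌈(n : ℝ) * lam⌉₊ < i),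
        (n.choose i : ℝ) * (2 ^ (i - ⌈(n : ℝ) * lam⌉₊) - 1)) ∧
    Tendsto (gammaDRS lam) atTop (nhds 0) ∧
    ∃ c > (0 : ℝ), ∀ᶠ n : ℕ in atTop, |gammaDRS lam n| ≤ (2 : ℝ) ^ (-(c * n)) := by
  have hcpos : 0 < lam - (Real.logb 2 3 - 1) := by
    have := hb_two_thirds
    linarith
  refine ⟨gammaDRS_eq lam, ?_, ?_⟩
  · apply squeeze_zero (fun n => gammaDRS_nonneg lam n)
      (fun n => gammaDRS_le_rpow lam hlam n)
      (rpow_tendsto _ hcpos)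
  · refine ⟨lam - (Real.logb 2 3 - 1), hcpos, Eventually.of_forall fun n => ?_⟩
    rw [abs_of_nonneg (gammaDRS_nonneg lam n)]
    exact gammaDRS_le_rpow lam hlam n
end

section
/- Let λ > 1/log₂ 3 ≈ 0.631 and let c > 0 be a constant. Then the sequence γ_C(n) := 4c·n·2^{n(1 − λ log₂ 3)} tends to 0 as n → ∞; more generally, Σ_{k=0}^{n−⌈nλ⌉} C(n−k, ⌈nλ⌉)·2^{2k} ≤ n·2^{n(2 − λ log₂ 3)} for all sufficiently large n, so its ratio to 2ⁿ vanishes exponentially. -/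
open Filter Finset

lemma choose_mul_three_pow_le (N m : ℕ) : N.choose m * 3 ^ m ≤ 4 ^ N := by
  rcases le_or_gt m N with h | h
  · have hp : ∑ j ∈ Finset.range (N + 1), 3 ^ j * N.choose j = (4 : ℕ) ^ N := by
      have := add_pow (3 : ℕ) 1 N
      simpa using this.symm
    have := Finset.single_le_sum (f := fun j => 3 ^ j * N.choose j)
      (fun _ _ => Nat.zero_le _) (Finset.mem_range.mpr (Nat.lt_succ_of_le h))
    exact le_trans (by simpa [mul_comm] using this) hp.le
  · simp [Nat.choose_eq_zero_of_lt h]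

/-- For `λ > 1/log₂ 3` and `c > 0`, the bound `γ_C(n) = 4c·n·2^{n(1 − λ log₂ 3)}`
tends to `0`; moreover `Σ_{k=0}^{n−⌈nλ⌉} C(n−k, ⌈nλ⌉)·2^{2k} ≤ n·2^{n(2 − λ log₂ 3)}`
for all sufficiently large `n`, so its ratio to `2ⁿ` vanishes. -/
theorem adrs_overhead_vanishes (lam c : ℝ) (hc : 0 < c)
    (hlam : 1 / Real.logb 2 3 < lam) :
    Tendsto (fun n : ℕ => 4 * c * n * (2 : ℝ) ^ ((n : ℝ) * (1 - lam * Real.logb 2 3)))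
      atTop (nhds 0) ∧
    (∀ᶠ n : ℕ in atTop,
      (∑ k ∈ Finset.range (n - ⌈(n : ℝ) * lam⌉₊ + 1),
          (((n - k).choose ⌈(n : ℝ) * lam⌉₊ : ℕ) : ℝ) * 2 ^ (2 * k))
        ≤ (n : ℝ) * (2 : ℝ) ^ ((n : ℝ) * (2 - lam * Real.logb 2 3))) ∧
    Tendsto (fun n : ℕ =>
      (∑ k ∈ Finset.range (n - ⌈(n : ℝ) * lam⌉₊ + 1),
          (((n - k).choose ⌈(n : ℝ) * lam⌉₊ : ℕ) : ℝ) * 2 ^ (2 * k)) / 2 ^ n)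
      atTop (nhds 0) := by
  set L : ℝ := Real.logb 2 3 with hLdef
  have hL : 0 < L := Real.logb_pos one_lt_two (by norm_num)
  have hlam0 : 0 < lam := lt_trans (div_pos one_pos hL) hlam
  have hLlam : 1 < lam * L := by
    have := (div_lt_iff₀ hL).mp hlam
    linarith
  have hβ : 1 - lam * L < 0 := by linarith
  set r : ℝ := (2 : ℝ) ^ (1 - lam * L) with hrdef
  have hr0 : (0 : ℝ) < r := Real.rpow_pos_of_pos two_pos _
  have hr1 : r < 1 := Real.rpow_lt_one_of_one_lt_of_neg one_lt_two hβ
  have hpow : ∀ n : ℕ, (2 : ℝ) ^ ((n : ℝ) * (1 - lam * L)) = r ^ n := by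
    intro n
    rw [hrdef, mul_comm, Real.rpow_mul (by norm_num), Real.rpow_natCast]
  have hnr : Tendsto (fun n : ℕ => (n : ℝ) * r ^ n) atTop (nhds 0) := by
    have := tendsto_pow_const_mul_const_pow_of_lt_one 1 hr0.le hr1
    simpa using this
  -- Key pointwise bound on summands
  have hterm : ∀ n : ℕ, ∀ k ∈ Finset.range (n - ⌈(n : ℝ) * lam⌉₊ + 1),
      (((n - k).choose ⌈(n : ℝ) * lam⌉₊ : ℕ) : ℝ) * 2 ^ (2 * k)
        ≤ (2 : ℝ) ^ ((n : ℝ) * (2 - lam * L)) := by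
    intro n k hk
    set m := ⌈(n : ℝ) * lam⌉₊ with hm
    have hk' : k ≤ n := le_trans (Nat.lt_succ_iff.mp (Finset.mem_range.mp hk)) (Nat.sub_le _ _)
    have hRHS : (2 : ℝ) ^ ((n : ℝ) * (2 - lam * L)) = 4 ^ n * (3 : ℝ) ^ (-((n : ℝ) * lam)) := by
      have h23 : (2 : ℝ) ^ L = 3 := Real.rpow_logb two_pos (by norm_num) (by norm_num)
      have : (n : ℝ) * (2 - lam * L) = 2 * n + (L * (-((n : ℝ) * lam))) := by ring
      rw [this, Real.rpow_add two_pos, Real.rpow_mul (by norm_num : (0:ℝ) ≤ 2) L, h23]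
      congr 1
      rw [show (2:ℝ) * n = ((2 * n : ℕ) : ℝ) by push_cast; ring, Real.rpow_natCast,
        pow_mul]
      norm_num
    rw [hRHS]
    have h3 : (3 : ℝ) ^ (-((n : ℝ) * lam)) = ((3 : ℝ) ^ ((n : ℝ) * lam))⁻¹ := by
      rw [Real.rpow_neg (by norm_num)]
    have h3pos : (0 : ℝ) < (3 : ℝ) ^ ((n : ℝ) * lam) := Real.rpow_pos_of_pos (by norm_num) _
    rw [h3, ← div_eq_mul_inv, le_div_iff₀ h3pos]
    -- goal: choose * 2^(2k) * 3^(nλ) ≤ 4^n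
    have hmono : (3 : ℝ) ^ ((n : ℝ) * lam) ≤ (3 : ℝ) ^ (m : ℝ) :=
      Real.rpow_le_rpow_left_iff (by norm_num : (1:ℝ) < 3) |>.mpr (Nat.le_ceil _)
    have hnat : (((n - k).choose m : ℕ) : ℝ) * 3 ^ m ≤ 4 ^ (n - k) := by
      exact_mod_cast Nat.cast_le.mpr (choose_mul_three_pow_le (n - k) m)
    calc (((n - k).choose m : ℕ) : ℝ) * 2 ^ (2 * k) * (3 : ℝ) ^ ((n : ℝ) * lam)
        ≤ (((n - k).choose m : ℕ) : ℝ) * 2 ^ (2 * k) * (3 : ℝ) ^ (m : ℝ) := by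
          apply mul_le_mul_of_nonneg_left hmono
          positivity
      _ = ((((n - k).choose m : ℕ) : ℝ) * 3 ^ m) * 4 ^ k := by
          rw [Real.rpow_natCast, pow_mul]
          ring
      _ ≤ 4 ^ (n - k) * 4 ^ k := by
          apply mul_le_mul_of_nonneg_right hnat
          positivity
      _ = 4 ^ n := by rw [← pow_add, Nat.sub_add_cancel hk']
  -- Part 2
  have part2 : ∀ᶠ n : ℕ in atTop,
      (∑ k ∈ Finset.range (n - ⌈(n : ℝ) * lam⌉₊ + 1),
          (((n - k).choose ⌈(n : ℝ) * lam⌉₊ : ℕ) : ℝ) * 2 ^ (2 * k))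
        ≤ (n : ℝ) * (2 : ℝ) ^ ((n : ℝ) * (2 - lam * L)) := by
    filter_upwards [eventually_ge_atTop 1] with n hn
    set m := ⌈(n : ℝ) * lam⌉₊ with hm
    have hm1 : 1 ≤ m := by
      rw [hm]
      apply Nat.one_le_ceil_iff.mpr
      positivity
    have hcard : n - m + 1 ≤ n := by omega
    calc (∑ k ∈ Finset.range (n - m + 1), (((n - k).choose m : ℕ) : ℝ) * 2 ^ (2 * k))
        ≤ (n - m + 1 : ℕ) * (2 : ℝ) ^ ((n : ℝ) * (2 - lam * L)) := by
          simpa using Finset.sum_le_card_nsmul _ _ _ (hterm n)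
      _ ≤ (n : ℝ) * (2 : ℝ) ^ ((n : ℝ) * (2 - lam * L)) := by
          apply mul_le_mul_of_nonneg_right _ (Real.rpow_pos_of_pos two_pos _).le
          exact_mod_cast hcard
  refine ⟨?_, part2, ?_⟩
  · have h1 := hnr.const_mul (4 * c)
    simp only [mul_zero] at h1
    apply h1.congr
    intro n
    rw [hpow n]
    ring
  · apply squeeze_zero' (g := fun n : ℕ => (n : ℝ) * r ^ n)
    · filter_upwards with n
      apply div_nonneg _ (by positivity)
      apply Finset.sum_nonneg
      intro k _
      positivity
    · filter_upwards [part2] with n hn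
      have h2n : (0 : ℝ) < 2 ^ n := by positivity
      rw [div_le_iff₀ h2n]
      calc _ ≤ (n : ℝ) * (2 : ℝ) ^ ((n : ℝ) * (2 - lam * L)) := hn
        _ = (n : ℝ) * r ^ n * 2 ^ n := by
            rw [← hpow n]
            rw [mul_assoc, ← Real.rpow_natCast 2 n, ← Real.rpow_add two_pos]
            ring_nf
    · exact hnr
end
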